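/- Let T > 0 and let f : ℝ → ℝ be a real-valued Schwartz function. Then (1/π) ∫_{ℝ∖{0}} (k/(1 − e^{−k/T})) |f̂(k)|² dk ≥ (1/π) ∫_{0}^{∞} k |f̂(k)|² dk ≥ 0 (and in particular the left-hand integral converges absolutely). -/

import Mathlib

open MeasureTheory Complex

/-- The Fourier transform `f̂(k) = ∫ f(u) e^{−iku} du` of an (integrable)
function `f : ℝ → ℂ`. -/
noncomputable def ft (f : ℝ → ℂ) (k : ℝ) : ℂ :=
  ∫ u : ℝ, f u * Complex.exp (-Complex.I * k * u)

open Real SchwartzMap in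
/-- Complexification of a real-valued Schwartz function. -/
noncomputable def cpx (f : SchwartzMap ℝ ℝ) : SchwartzMap ℝ ℂ where
  toFun x := (f x : ℂ)
  smooth' := Complex.ofRealCLM.contDiff.comp f.smooth'
  decay' := by
    intro k n
    obtain ⟨C, hC⟩ := f.decay' k n
    refine ⟨C, fun x => ?_⟩
    have : (fun x : ℝ => (f x : ℂ)) = Complex.ofRealLI ∘ f := rfl
    rw [this, Complex.ofRealLI.norm_iteratedFDeriv_comp_left ((f.smooth ⊤).contDiffAt (x := x)) (mod_cast le_top)]
    exact hC x

open Real in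
lemma ft_eq (f : SchwartzMap ℝ ℝ) (k : ℝ) :
    ft (fun u => (f u : ℂ)) k = FourierTransform.fourier (⇑(cpx f)) (k / (2 * π)) := by
  rw [Real.fourier_real_eq_integral_exp_smul]
  unfold ft
  congr 1
  funext u
  have hπ : (2 : ℝ) * π ≠ 0 := by positivity
  rw [smul_eq_mul]
  rw [mul_comm]
  congr 2
  push_cast
  have hπc : (π : ℂ) ≠ 0 := by exact_mod_cast Real.pi_ne_zero
  have : (-2 : ℂ) * π * u * (k / (2 * π)) = -k * u := by
    field_simp
  rw [this]
  ring

set_option maxHeartbeats 1000000 in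
/-- Positivity of the thermal boundary two-point function at temperature `T > 0`
for a real-valued Schwartz function `f`: the thermal integral converges
absolutely and dominates the vacuum one, which is itself non-negative. -/
theorem thermal_boundary_two_point_positivity (T : ℝ) (hT : 0 < T) (f : SchwartzMap ℝ ℝ) :
    IntegrableOn
      (fun k : ℝ => k / (1 - Real.exp (-k / T)) * ‖ft (fun u => (f u : ℂ)) k‖ ^ 2)
      {(0 : ℝ)}ᶜ ∧
    (1 / Real.pi) *
        (∫ k in {(0 : ℝ)}ᶜ, k / (1 - Real.exp (-k / T)) * ‖ft (fun u => (f u : ℂ)) k‖ ^ 2) ≥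
      (1 / Real.pi) * ∫ k in Set.Ioi (0 : ℝ), k * ‖ft (fun u => (f u : ℂ)) k‖ ^ 2 ∧
    0 ≤ (1 / Real.pi) * ∫ k in Set.Ioi (0 : ℝ), k * ‖ft (fun u => (f u : ℂ)) k‖ ^ 2 := by
  have hπ : (0 : ℝ) < Real.pi := Real.pi_pos
  set F : SchwartzMap ℝ ℂ := SchwartzMap.fourierTransformCLM ℂ (cpx f) with hF
  have hFeq : ∀ k : ℝ, ft (fun u => (f u : ℂ)) k = F (k / (2 * Real.pi)) := by
    intro k
    rw [ft_eq, hF, SchwartzMap.fourierTransformCLM_apply, SchwartzMap.fourier_coe]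
  set φ : ℝ → ℝ := fun k => ‖ft (fun u => (f u : ℂ)) k‖ ^ 2 with hφ
  have hφnn : ∀ k, 0 ≤ φ k := fun k => by positivity
  have hφcont : Continuous φ := by
    have : φ = fun k => ‖F (k / (2 * Real.pi))‖ ^ 2 := by
      funext k; simp only [hφ, hFeq]
    rw [this]
    fun_prop
  set B : ℝ → ℝ := fun k => k / (1 - Real.exp (-k / T)) with hB
  -- bounds on B
  have hBpos : ∀ k : ℝ, k ≠ 0 → 0 ≤ B k := by
    intro k hk
    rcases lt_or_gt_of_ne hk with h | h
    · have he : 1 < Real.exp (-k / T) :=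
        Real.one_lt_exp_iff.mpr (div_pos (neg_pos.mpr h) hT)
      have hd : 1 - Real.exp (-k / T) < 0 := by linarith
      rw [hB]
      exact div_nonneg_iff.mpr (Or.inr ⟨h.le, by linarith⟩)
    · have he : Real.exp (-k / T) < 1 :=
        Real.exp_lt_one_iff.mpr (div_neg_of_neg_of_pos (neg_neg_iff_pos.mpr h) hT)
      have hd : 0 < 1 - Real.exp (-k / T) := by linarith
      positivity
  have hBge : ∀ k : ℝ, 0 < k → k ≤ B k := by
    intro k h
    have he : Real.exp (-k / T) < 1 :=
      Real.exp_lt_one_iff.mpr (div_neg_of_neg_of_pos (neg_neg_iff_pos.mpr h) hT)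
    have hd : 0 < 1 - Real.exp (-k / T) := by linarith
    rw [hB, le_div_iff₀ hd]
    have hp : 0 ≤ Real.exp (-k / T) := Real.exp_nonneg _
    nlinarith
  have hBle : ∀ k : ℝ, k ≠ 0 → B k ≤ T + |k| := by
    intro k hk
    rcases lt_or_gt_of_ne hk with h | h
    · -- k < 0 : B k ≤ T
      have he : 1 < Real.exp (-k / T) :=
        Real.one_lt_exp_iff.mpr (div_pos (neg_pos.mpr h) hT)
      have hd : 1 - Real.exp (-k / T) < 0 := by linarith
      have h1 : B k ≤ T := by
        rw [hB, div_le_iff_of_neg hd]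
        have h2 : (-k / T) + 1 ≤ Real.exp (-k / T) := Real.add_one_le_exp _
        have h3 : T * ((-k / T) + 1) ≤ T * Real.exp (-k / T) :=
          mul_le_mul_of_nonneg_left h2 hT.le
        have h4 : T * (-k / T) = -k := by field_simp
        nlinarith
      have : 0 ≤ |k| := abs_nonneg k
      linarith
    · -- k > 0 : B k ≤ T + k
      have he : Real.exp (-k / T) < 1 :=
        Real.exp_lt_one_iff.mpr (div_neg_of_neg_of_pos (neg_neg_iff_pos.mpr h) hT)
      have hd : 0 < 1 - Real.exp (-k / T) := by linarith
      have habs : |k| = k := abs_of_pos h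
      rw [hB, habs, div_le_iff₀ hd]
      -- k ≤ (T + k) * (1 - exp(-k/T)), i.e. (T+k) exp(-k/T) ≤ T
      have h2 : (k / T) + 1 ≤ Real.exp (k / T) := Real.add_one_le_exp _
      have h5 : Real.exp (-k / T) = (Real.exp (k / T))⁻¹ := by
        rw [← Real.exp_neg]; ring_nf
      have h6 : Real.exp (-k / T) ≤ ((k / T) + 1)⁻¹ := by
        rw [h5]
        apply inv_anti₀
        · positivity
        · exact h2
      have h7 : ((k / T) + 1)⁻¹ = T / (T + k) := by
        have hstep : (k / T) + 1 = (T + k) / T := by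
          rw [eq_div_iff (ne_of_gt hT)]
          field_simp
          ring
        rw [hstep, inv_div]
      have h8 : (T + k) * Real.exp (-k / T) ≤ T := by
        rw [h7] at h6
        calc (T + k) * Real.exp (-k / T) ≤ (T + k) * (T / (T + k)) :=
              mul_le_mul_of_nonneg_left h6 (by linarith)
          _ = T := by field_simp
      nlinarith
  -- integrability of the dominating function
  have hdom : Integrable (fun k : ℝ => (T + |k|) * φ k) := by
    set M : ℝ := ‖F.toBoundedContinuousFunction‖ with hM
    have hMnn : 0 ≤ M := norm_nonneg _
    have hFb : ∀ x : ℝ, ‖F x‖ ≤ M := fun x =>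
      F.toBoundedContinuousFunction.norm_coe_le_norm x
    have hint1 : Integrable (fun x : ℝ => T * M * ‖F x‖) :=
      (F.integrable (μ := volume)).norm.const_mul _
    have hint2 : Integrable (fun x : ℝ => 2 * Real.pi * M * (‖x‖ ^ 1 * ‖F x‖)) :=
      (F.integrable_pow_mul (μ := volume) 1).const_mul _
    have hG : Integrable (fun x : ℝ =>
        T * M * ‖F x‖ + 2 * Real.pi * M * (‖x‖ ^ 1 * ‖F x‖)) := hint1.add hint2
    have hGc : Integrable (fun k : ℝ =>
        T * M * ‖F ((2 * Real.pi)⁻¹ * k)‖ +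
          2 * Real.pi * M * (‖(2 * Real.pi)⁻¹ * k‖ ^ 1 * ‖F ((2 * Real.pi)⁻¹ * k)‖)) :=
      hG.comp_mul_left' (by positivity)
    apply hGc.mono
    · apply Continuous.aestronglyMeasurable
      have : Continuous fun k : ℝ => T + |k| := by fun_prop
      exact this.mul hφcont
    · filter_upwards with k
      have hk2 : (2 * Real.pi)⁻¹ * k = k / (2 * Real.pi) := by ring
      have hφk : φ k = ‖F ((2 * Real.pi)⁻¹ * k)‖ ^ 2 := by
        simp only [hφ, hFeq]
        rw [hk2]
      have hrhs : (0:ℝ) ≤ T * M * ‖F ((2 * Real.pi)⁻¹ * k)‖ +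
          2 * Real.pi * M * (‖(2 * Real.pi)⁻¹ * k‖ ^ 1 * ‖F ((2 * Real.pi)⁻¹ * k)‖) := by
        positivity
      rw [Real.norm_eq_abs, Real.norm_eq_abs,
        _root_.abs_of_nonneg (by positivity : (0:ℝ) ≤ (T + |k|) * φ k),
        _root_.abs_of_nonneg hrhs, hφk]
      have hb : ‖F ((2 * Real.pi)⁻¹ * k)‖ ≤ M := hFb _
      have hbn : 0 ≤ ‖F ((2 * Real.pi)⁻¹ * k)‖ := norm_nonneg _
      have hsq : ‖F ((2 * Real.pi)⁻¹ * k)‖ ^ 2 ≤ M * ‖F ((2 * Real.pi)⁻¹ * k)‖ := by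
        nlinarith
      have habs : |k| = 2 * Real.pi * ‖(2 * Real.pi)⁻¹ * k‖ := by
        rw [Real.norm_eq_abs, abs_mul, _root_.abs_of_nonneg (by positivity : (0:ℝ) ≤ (2*Real.pi)⁻¹)]
        field_simp
      calc (T + |k|) * ‖F ((2 * Real.pi)⁻¹ * k)‖ ^ 2
          ≤ (T + |k|) * (M * ‖F ((2 * Real.pi)⁻¹ * k)‖) :=
            mul_le_mul_of_nonneg_left hsq (by positivity)
        _ ≤ _ := by
            rw [habs]
            set y := ‖F ((2 * Real.pi)⁻¹ * k)‖ with hy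
            set a := ‖(2 * Real.pi)⁻¹ * k‖ with ha
            have h0 : 0 ≤ a := norm_nonneg _
            have hsq2 : y * y ≤ M * y := by nlinarith
            have p1 : T * (y * y) ≤ T * (M * y) := mul_le_mul_of_nonneg_left hsq2 hT.le
            have p2 : a * (y * y) ≤ a * (M * y) := mul_le_mul_of_nonneg_left hsq2 h0
            have p3 : 2 * Real.pi * (a * (y * y)) ≤ 2 * Real.pi * (a * (M * y)) :=
              mul_le_mul_of_nonneg_left p2 (by positivity)
            nlinarith [p1, p3]
  have hmeas : AEStronglyMeasurable (fun k : ℝ => B k * φ k) volume := by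
    apply AEStronglyMeasurable.mul _ hφcont.aestronglyMeasurable
    apply Measurable.aestronglyMeasurable
    apply Measurable.div measurable_id
    fun_prop
  -- first conjunct
  have hIntOn : IntegrableOn (fun k : ℝ => B k * φ k) {(0 : ℝ)}ᶜ := by
    apply (hdom.restrict (s := {(0:ℝ)}ᶜ)).mono (hmeas.restrict)
    rw [ae_restrict_iff' (measurableSet_singleton (0:ℝ)).compl]
    filter_upwards with k hk
    simp only [Set.mem_compl_iff, Set.mem_singleton_iff] at hk
    rw [Real.norm_eq_abs, Real.norm_eq_abs,
      _root_.abs_of_nonneg (mul_nonneg (hBpos k hk) (hφnn k)),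
      _root_.abs_of_nonneg (mul_nonneg (by positivity) (hφnn k))]
    exact mul_le_mul_of_nonneg_right (hBle k hk) (hφnn k)
  have hvacInt : IntegrableOn (fun k : ℝ => k * φ k) (Set.Ioi (0 : ℝ)) := by
    apply (hdom.restrict (s := Set.Ioi (0:ℝ))).mono
      ((continuous_id'.mul hφcont).aestronglyMeasurable.restrict)
    rw [ae_restrict_iff' measurableSet_Ioi]
    filter_upwards with k hk
    rw [Set.mem_Ioi] at hk
    show ‖k * φ k‖ ≤ ‖(T + |k|) * φ k‖
    rw [Real.norm_eq_abs, Real.norm_eq_abs,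
      _root_.abs_of_nonneg (mul_nonneg hk.le (hφnn k)),
      _root_.abs_of_nonneg (mul_nonneg (by positivity) (hφnn k))]
    have : k ≤ T + |k| := by
      have := abs_of_pos hk; linarith
    exact mul_le_mul_of_nonneg_right this (hφnn k)
  refine ⟨hIntOn, ?_, ?_⟩
  · -- the main inequality
    rw [ge_iff_le]
    apply mul_le_mul_of_nonneg_left _ (by positivity : (0:ℝ) ≤ 1 / Real.pi)
    have hsplit : ({(0:ℝ)}ᶜ : Set ℝ) = Set.Iio 0 ∪ Set.Ioi 0 := by
      rw [Set.Iio_union_Ioi]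
    have hIio : IntegrableOn (fun k : ℝ => B k * φ k) (Set.Iio (0 : ℝ)) :=
      hIntOn.mono_set (by rw [hsplit]; exact Set.subset_union_left)
    have hIoi : IntegrableOn (fun k : ℝ => B k * φ k) (Set.Ioi (0 : ℝ)) :=
      hIntOn.mono_set (by rw [hsplit]; exact Set.subset_union_right)
    have hU : ∫ k in ({(0:ℝ)}ᶜ : Set ℝ), B k * φ k
        = (∫ k in Set.Iio (0:ℝ), B k * φ k) + ∫ k in Set.Ioi (0:ℝ), B k * φ k := by
      rw [hsplit]
      exact setIntegral_union ((Set.Iic_disjoint_Ioi le_rfl).mono_left Set.Iio_subset_Iic_self) measurableSet_Ioi hIio hIoi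
    rw [hU]
    have h1 : 0 ≤ ∫ k in Set.Iio (0:ℝ), B k * φ k := by
      apply setIntegral_nonneg measurableSet_Iio
      intro k hk
      rw [Set.mem_Iio] at hk
      exact mul_nonneg (hBpos k hk.ne) (hφnn k)
    have h2 : (∫ k in Set.Ioi (0:ℝ), k * φ k) ≤ ∫ k in Set.Ioi (0:ℝ), B k * φ k := by
      apply setIntegral_mono_on hvacInt hIoi measurableSet_Ioi
      intro k hk
      rw [Set.mem_Ioi] at hk
      exact mul_le_mul_of_nonneg_right (hBge k hk) (hφnn k)
    linarith
  · apply mul_nonneg (by positivity)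
    apply setIntegral_nonneg measurableSet_Ioi
    intro k hk
    rw [Set.mem_Ioi] at hk
    exact mul_nonneg hk.le (hφnn k)
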